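/- arXiv:2406.04020 — 3 statements merged into one kernel-verified Lean document; each statement's English description precedes it below -/
import Mathlib

section
/- For every n ≥ 1, the edge open packing number of the path P_n equals (n+1)/2 if n ≡ 3 (mod 4), and ⌈(n-1)/2⌉ otherwise. -/
open SimpleGraph

/-- An edge open packing (EOP) set: a set `B` of edges of `G` such that no edge of `G`
(other than the two edges themselves) joins an endvertex of one edge of `B` to an
endvertex of another edge of `B`. -/
def IsEOPSet {V : Type*} (G : SimpleGraph V) (B : Set (Sym2 V)) : Prop :=
  B ⊆ G.edgeSet ∧ ∀ e₁ ∈ B, ∀ e₂ ∈ B, e₁ ≠ e₂ →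
    ∀ x ∈ e₁, ∀ y ∈ e₂, G.Adj x y → s(x, y) = e₁ ∨ s(x, y) = e₂

/-- An induced matching: a set `M` of edges of `G` such that no edge of `G` joins an
endvertex of one edge of `M` to an endvertex of another edge of `M` (this in particular
forces `M` to be a matching). -/
def IsInducedMatching {V : Type*} (G : SimpleGraph V) (M : Set (Sym2 V)) : Prop :=
  M ⊆ G.edgeSet ∧ ∀ e₁ ∈ M, ∀ e₂ ∈ M, e₁ ≠ e₂ →
    ∀ x ∈ e₁, ∀ y ∈ e₂, ¬ G.Adj x y

/-- The edge open packing number `ρₑᵒ(G)`. -/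
noncomputable def eopNum {V : Type*} (G : SimpleGraph V) : ℕ :=
  sSup {n | ∃ B : Finset (Sym2 V), IsEOPSet G ↑B ∧ B.card = n}

/-- The induced matching number `ν_I(G)`. -/
noncomputable def inducedMatchingNum {V : Type*} (G : SimpleGraph V) : ℕ :=
  sSup {n | ∃ M : Finset (Sym2 V), IsInducedMatching G ↑M ∧ M.card = n}

/-- The independence number `α(G)`. -/
noncomputable def indepNum {V : Type*} (G : SimpleGraph V) : ℕ :=
  sSup {n | ∃ S : Finset V, (∀ x ∈ S, ∀ y ∈ S, ¬ G.Adj x y) ∧ S.card = n}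

/-- The open packing number `ρᵒ(G)`: maximum size of a set of vertices whose open
neighborhoods are pairwise disjoint. -/
noncomputable def openPackNum {V : Type*} (G : SimpleGraph V) : ℕ :=
  sSup {n | ∃ P : Finset V,
    (∀ x ∈ P, ∀ y ∈ P, x ≠ y → ∀ z, ¬ (G.Adj x z ∧ G.Adj y z)) ∧ P.card = n}

/-- The 2-packing number `ρ₂(G)`: maximum size of a set of vertices pairwise at
distance greater than 2. -/
noncomputable def twoPackNum {V : Type*} (G : SimpleGraph V) : ℕ :=
  sSup {n | ∃ P : Finset V,
    (∀ x ∈ P, ∀ y ∈ P, x ≠ y →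
      ¬ G.Adj x y ∧ (∀ z, ¬ (G.Adj x z ∧ G.Adj z y))) ∧ P.card = n}

/-- The 3-packing number `ρ₃(G)`: maximum size of a set of vertices pairwise at
distance greater than 3. -/
noncomputable def threePackNum {V : Type*} (G : SimpleGraph V) : ℕ :=
  sSup {n | ∃ P : Finset V,
    (∀ x ∈ P, ∀ y ∈ P, x ≠ y →
      ¬ G.Adj x y ∧ (∀ z, ¬ (G.Adj x z ∧ G.Adj z y)) ∧
      (∀ z w, ¬ (G.Adj x z ∧ G.Adj z w ∧ G.Adj w y))) ∧ P.card = n}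

/-- Minimum degree of `G` (degrees measured via `Set.ncard` of neighborhoods). -/
noncomputable def minDeg {V : Type*} (G : SimpleGraph V) : ℕ :=
  sInf {d | ∃ v, d = (G.neighborSet v).ncard}

/-- The lexicographic product `G ∘ H`. -/
def lexProd {V W : Type*} (G : SimpleGraph V) (H : SimpleGraph W) :
    SimpleGraph (V × W) where
  Adj x y := G.Adj x.1 y.1 ∨ (x.1 = y.1 ∧ H.Adj x.2 y.2)
  symm := by
    constructor
    rintro ⟨g, h⟩ ⟨g', h'⟩ (hgg | ⟨rfl, hh⟩)
    · exact Or.inl hgg.symm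
    · exact Or.inr ⟨rfl, hh.symm⟩
  loopless := by
    constructor
    rintro ⟨g, h⟩ (hgg | ⟨-, hh⟩)
    · exact G.irrefl hgg
    · exact H.irrefl hh

/-- The direct (tensor) product `G × H`. -/
def tensorProd {V W : Type*} (G : SimpleGraph V) (H : SimpleGraph W) :
    SimpleGraph (V × W) where
  Adj x y := G.Adj x.1 y.1 ∧ H.Adj x.2 y.2
  symm := by constructor; rintro ⟨g, h⟩ ⟨g', h'⟩ ⟨h1, h2⟩; exact ⟨h1.symm, h2.symm⟩
  loopless := by constructor; rintro ⟨g, h⟩ ⟨h1, -⟩; exact G.irrefl h1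

/-- The strong product `G ⊠ H`. -/
def strongProd {V W : Type*} (G : SimpleGraph V) (H : SimpleGraph W) :
    SimpleGraph (V × W) where
  Adj x y := x ≠ y ∧ (x.1 = y.1 ∨ G.Adj x.1 y.1) ∧ (x.2 = y.2 ∨ H.Adj x.2 y.2)
  symm := by
    constructor
    rintro x y ⟨hne, h1, h2⟩
    exact ⟨hne.symm, h1.imp Eq.symm (fun h => h.symm), h2.imp Eq.symm (fun h => h.symm)⟩
  loopless := by constructor; rintro x ⟨hne, -, -⟩; exact hne rfl

/-- The star `K_{1,r}` with center `none` and leaves `some i`. -/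
def starGraph (r : ℕ) : SimpleGraph (Option (Fin r)) :=
  SimpleGraph.fromRel (fun x _ => x = none)

/-- The spider `S^k`: obtained from `K_{1,k}` by subdividing every edge exactly once.
The center is `none`, `some (i, false)` are the support vertices and `some (i, true)`
the leaves. -/
def spiderGraph (k : ℕ) : SimpleGraph (Option (Fin k × Bool)) :=
  SimpleGraph.fromRel (fun x y =>
    (x = none ∧ ∃ i, y = some (i, false)) ∨
    (∃ i, x = some (i, false) ∧ y = some (i, true)))

/-- The `n`-dimensional hypercube `Q_n`: vertices are `Fin n → Bool`, adjacent iff they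
differ in exactly one coordinate. -/
def hypercube (n : ℕ) : SimpleGraph (Fin n → Bool) :=
  SimpleGraph.fromRel (fun x y =>
    (Finset.univ.filter (fun i => x i ≠ y i)).card = 1)

/-- The corona product `G ⊙ H`: vertices `(v, none)` form a copy of `G`, vertices
`(v, some h)` form a copy of `H` for each `v`, and `(v, none)` is joined to every
vertex of its copy of `H`. -/
def corona {V W : Type*} (G : SimpleGraph V) (H : SimpleGraph W) :
    SimpleGraph (V × Option W) :=
  SimpleGraph.fromRel (fun x y =>
    (x.2 = none ∧ y.2 = none ∧ G.Adj x.1 y.1) ∨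
    (x.1 = y.1 ∧ ∃ h h', x.2 = some h ∧ y.2 = some h' ∧ H.Adj h h') ∨
    (x.1 = y.1 ∧ x.2 = none ∧ ∃ h, y.2 = some h))

/-- The set of endvertices of the edges of `B`. -/
def supportSet {V : Type*} (B : Set (Sym2 V)) : Set V := {v | ∃ e ∈ B, v ∈ e}

private lemma window_bound (S : Finset ℕ) (a : ℕ)
    (h1 : ∀ i ∈ S, a ≤ i ∧ i < a + 4)
    (h2 : ∀ i ∈ S, ∀ j ∈ S, j ≠ i + 2) : S.card ≤ 2 := by
  have hinj : Set.InjOn (· % 2) S := by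
    intro x hx y hy hxy
    have hx' := h1 x hx; have hy' := h1 y hy
    have h2a := h2 x hx y hy; have h2b := h2 y hy x hx
    simp only at hxy
    omega
  calc S.card = (S.image (· % 2)).card := (Finset.card_image_of_injOn hinj).symm
    _ ≤ ({0, 1} : Finset ℕ).card := Finset.card_le_card (by
        intro b hb
        simp only [Finset.mem_image] at hb
        obtain ⟨x, -, rfl⟩ := hb
        simp only [Finset.mem_insert, Finset.mem_singleton]
        omega)
    _ ≤ 2 := by simp

private lemma index_bound : ∀ m : ℕ, ∀ S : Finset ℕ, (∀ i ∈ S, i < m) →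
    (∀ i ∈ S, ∀ j ∈ S, j ≠ i + 2) → S.card ≤ 2 * (m / 4) + min (m % 4) 2 := by
  intro m
  induction m using Nat.strong_induction_on with
  | _ m ih =>
    intro S h1 h2
    by_cases hm : m ≤ 4
    · have c1 : S.card ≤ 2 :=
        window_bound S 0 (fun i hi => ⟨Nat.zero_le _, by have := h1 i hi; omega⟩) h2
      have c2 : S.card ≤ m := by
        calc S.card ≤ (Finset.range m).card :=
              Finset.card_le_card (fun i hi => Finset.mem_range.mpr (h1 i hi))
          _ = m := Finset.card_range m
      omega
    · have hc : (S.filter (fun i => i < m - 4)).card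
          + (S.filter (fun i => ¬ i < m - 4)).card = S.card :=
        Finset.card_filter_add_card_filter_not _
      have b1 : (S.filter (fun i => i < m - 4)).card
          ≤ 2 * ((m - 4) / 4) + min ((m - 4) % 4) 2 :=
        ih (m - 4) (by omega) _
          (fun i hi => (Finset.mem_filter.mp hi).2)
          (fun i hi j hj => h2 i (Finset.mem_filter.mp hi).1 j (Finset.mem_filter.mp hj).1)
      have b2 : (S.filter (fun i => ¬ i < m - 4)).card ≤ 2 :=
        window_bound _ (m - 4)
          (fun i hi => by
            have h := Finset.mem_filter.mp hi
            have := h1 i h.1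
            have := h.2
            omega)
          (fun i hi j hj => h2 i (Finset.mem_filter.mp hi).1 j (Finset.mem_filter.mp hj).1)
      omega

private lemma count_lemma (m : ℕ) :
    ((Finset.range m).filter (fun i => i % 4 < 2)).card = 2 * (m / 4) + min (m % 4) 2 := by
  induction m with
  | zero => simp
  | succ m ih =>
    rw [Finset.range_add_one, Finset.filter_insert]
    by_cases h : m % 4 < 2
    · rw [if_pos h, Finset.card_insert_of_notMem (by simp)]
      omega
    · rw [if_neg h]
      omega

private lemma path_edge_char {n : ℕ} {e : Sym2 (Fin n)} (he : e ∈ (pathGraph n).edgeSet) :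
    ∃ u v : Fin n, e = s(u, v) ∧ (u : ℕ) + 1 = v := by
  induction e using Sym2.ind with
  | _ u v =>
    rw [SimpleGraph.mem_edgeSet, pathGraph_adj] at he
    rcases he with h | h
    · exact ⟨u, v, rfl, h⟩
    · exact ⟨v, u, Sym2.eq_swap, h⟩

/-- For every `n ≥ 1`, `ρₑᵒ(P_n) = (n+1)/2` if `n ≡ 3 (mod 4)` and `⌈(n-1)/2⌉` otherwise. -/
theorem stmt_1 (n : ℕ) (hn : 1 ≤ n) :
    eopNum (SimpleGraph.pathGraph n) =
      if n % 4 = 3 then (n + 1) / 2 else (n - 1 + 1) / 2 := by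
  have hn0 : 0 < n := hn
  set t : ℕ := 2 * ((n - 1) / 4) + min ((n - 1) % 4) 2 with ht
  -- the index map: an edge of the path to the value of its smaller endpoint
  set idx : Sym2 (Fin n) → ℕ :=
    Sym2.lift ⟨fun u v => min u.val v.val, fun u v => min_comm _ _⟩ with hidx
  have hidx_eq : ∀ (u v : Fin n), (u : ℕ) + 1 = v → idx s(u, v) = u := by
    intro u v huv
    simp only [hidx, Sym2.lift_mk]
    omega
  -- upper bound
  have hub : ∀ k ∈ {k | ∃ B : Finset (Sym2 (Fin n)),
      IsEOPSet (pathGraph n) ↑B ∧ B.card = k}, k ≤ t := by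
    rintro k ⟨B, ⟨hBE, hBeop⟩, rfl⟩
    have hinj : Set.InjOn idx B := by
      intro e1 h1 e2 h2 heq
      obtain ⟨u1, v1, rfl, hv1⟩ := path_edge_char (hBE h1)
      obtain ⟨u2, v2, rfl, hv2⟩ := path_edge_char (hBE h2)
      rw [hidx_eq u1 v1 hv1, hidx_eq u2 v2 hv2] at heq
      have hu : u1 = u2 := Fin.val_injective heq
      have hv : v1 = v2 := Fin.val_injective (by omega)
      rw [hu, hv]
    have hlt : ∀ i ∈ B.image idx, i < n - 1 := by
      intro i hi
      obtain ⟨e, heB, rfl⟩ := Finset.mem_image.mp hi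
      obtain ⟨u, v, rfl, hv⟩ := path_edge_char (hBE heB)
      rw [hidx_eq u v hv]
      have := v.isLt
      omega
    have hdiff : ∀ i ∈ B.image idx, ∀ j ∈ B.image idx, j ≠ i + 2 := by
      intro i hi j hj hji
      obtain ⟨e1, he1, rfl⟩ := Finset.mem_image.mp hi
      obtain ⟨e2, he2, rfl⟩ := Finset.mem_image.mp hj
      obtain ⟨u1, v1, rfl, hv1⟩ := path_edge_char (hBE he1)
      obtain ⟨u2, v2, rfl, hv2⟩ := path_edge_char (hBE he2)
      rw [hidx_eq u1 v1 hv1, hidx_eq u2 v2 hv2] at hji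
      have hne : s(u1, v1) ≠ s(u2, v2) := by
        intro h
        rw [Sym2.eq_iff] at h
        rcases h with ⟨ha, hb⟩ | ⟨ha, hb⟩
        · have := congrArg Fin.val ha; omega
        · have := congrArg Fin.val ha; have := congrArg Fin.val hb; omega
      have hadj : (pathGraph n).Adj v1 u2 := by
        rw [pathGraph_adj]; left; omega
      have := hBeop s(u1, v1) he1 s(u2, v2) he2 hne v1
        (Sym2.mem_iff.mpr (Or.inr rfl)) u2 (Sym2.mem_iff.mpr (Or.inl rfl)) hadj
      rcases this with h | h <;> rw [Sym2.eq_iff] at h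
      · rcases h with ⟨ha, hb⟩ | ⟨ha, hb⟩ <;>
          [skip; skip] <;>
          · have := congrArg Fin.val ha; have := congrArg Fin.val hb; omega
      · rcases h with ⟨ha, hb⟩ | ⟨ha, hb⟩ <;>
          · have := congrArg Fin.val ha; have := congrArg Fin.val hb; omega
    calc B.card = (B.image idx).card := (Finset.card_image_of_injOn hinj).symm
      _ ≤ t := index_bound (n - 1) _ hlt hdiff
  -- lower bound construction
  have hmem : t ∈ {k | ∃ B : Finset (Sym2 (Fin n)),
      IsEOPSet (pathGraph n) ↑B ∧ B.card = k} := by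
    set fm : ℕ → Fin n := fun k => ⟨k % n, Nat.mod_lt _ hn0⟩ with hfmdef
    have hfm : ∀ k, k < n → (fm k : ℕ) = k := fun k hk => Nat.mod_eq_of_lt hk
    refine ⟨((Finset.range (n - 1)).filter (fun i => i % 4 < 2)).image
      (fun i => s(fm i, fm (i + 1))), ⟨?_, ?_⟩, ?_⟩
    · intro e he
      obtain ⟨i, hi, rfl⟩ := Finset.mem_image.mp (Finset.mem_coe.mp he)
      obtain ⟨hir, -⟩ := Finset.mem_filter.mp hi
      have hilt := Finset.mem_range.mp hir
      rw [SimpleGraph.mem_edgeSet, pathGraph_adj]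
      left
      rw [hfm i (by omega), hfm (i + 1) (by omega)]
    · intro e1 he1 e2 he2 hne x hx y hy hadj
      obtain ⟨i, hi, rfl⟩ := Finset.mem_image.mp (Finset.mem_coe.mp he1)
      obtain ⟨j, hj, rfl⟩ := Finset.mem_image.mp (Finset.mem_coe.mp he2)
      obtain ⟨hir, hi4⟩ := Finset.mem_filter.mp hi
      obtain ⟨hjr, hj4⟩ := Finset.mem_filter.mp hj
      have hilt := Finset.mem_range.mp hir
      have hjlt := Finset.mem_range.mp hjr
      have hij : i ≠ j := by rintro rfl; exact hne rfl
      have hxv : (x : ℕ) = i ∨ (x : ℕ) = i + 1 := by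
        rcases Sym2.mem_iff.mp hx with h | h <;> rw [h]
        · left; exact hfm i (by omega)
        · right; exact hfm (i + 1) (by omega)
      have hyv : (y : ℕ) = j ∨ (y : ℕ) = j + 1 := by
        rcases Sym2.mem_iff.mp hy with h | h <;> rw [h]
        · left; exact hfm j (by omega)
        · right; exact hfm (j + 1) (by omega)
      rw [pathGraph_adj] at hadj
      have key : ((x : ℕ) = i ∧ (y : ℕ) = i + 1) ∨ ((y : ℕ) = i ∧ (x : ℕ) = i + 1) ∨
          ((x : ℕ) = j ∧ (y : ℕ) = j + 1) ∨ ((y : ℕ) = j ∧ (x : ℕ) = j + 1) := by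
        omega
      have hxi : (x : ℕ) = i → x = fm i := fun h =>
        Fin.val_injective (by rw [hfm i (by omega)]; exact h)
      have hxi1 : (x : ℕ) = i + 1 → x = fm (i + 1) := fun h =>
        Fin.val_injective (by rw [hfm (i + 1) (by omega)]; exact h)
      have hyi : (y : ℕ) = i → y = fm i := fun h =>
        Fin.val_injective (by rw [hfm i (by omega)]; exact h)
      have hyi1 : (y : ℕ) = i + 1 → y = fm (i + 1) := fun h =>
        Fin.val_injective (by rw [hfm (i + 1) (by omega)]; exact h)
      have hxj : (x : ℕ) = j → x = fm j := fun h =>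
        Fin.val_injective (by rw [hfm j (by omega)]; exact h)
      have hxj1 : (x : ℕ) = j + 1 → x = fm (j + 1) := fun h =>
        Fin.val_injective (by rw [hfm (j + 1) (by omega)]; exact h)
      have hyj : (y : ℕ) = j → y = fm j := fun h =>
        Fin.val_injective (by rw [hfm j (by omega)]; exact h)
      have hyj1 : (y : ℕ) = j + 1 → y = fm (j + 1) := fun h =>
        Fin.val_injective (by rw [hfm (j + 1) (by omega)]; exact h)
      rcases key with ⟨h1, h2⟩ | ⟨h1, h2⟩ | ⟨h1, h2⟩ | ⟨h1, h2⟩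
      · left; rw [hxi h1, hyi1 h2]
      · left; rw [hyi h1, hxi1 h2]; exact Sym2.eq_swap
      · right; rw [hxj h1, hyj1 h2]
      · right; rw [hyj h1, hxj1 h2]; exact Sym2.eq_swap
    · rw [Finset.card_image_of_injOn, count_lemma]
      intro a ha b hb hab
      have ha' := Finset.mem_range.mp (Finset.mem_filter.mp (Finset.mem_coe.mp ha)).1
      have hb' := Finset.mem_range.mp (Finset.mem_filter.mp (Finset.mem_coe.mp hb)).1
      rw [Sym2.eq_iff] at hab
      rcases hab with ⟨h1, h2⟩ | ⟨h1, h2⟩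
      · have e1 := congrArg Fin.val h1
        rw [hfm a (by omega), hfm b (by omega)] at e1
        exact e1
      · have e1 := congrArg Fin.val h1
        have e2 := congrArg Fin.val h2
        rw [hfm a (by omega), hfm (b + 1) (by omega)] at e1
        rw [hfm (a + 1) (by omega), hfm b (by omega)] at e2
        omega
  have h1 : eopNum (pathGraph n) ≤ t := csSup_le ⟨t, hmem⟩ hub
  have h2 : t ≤ eopNum (pathGraph n) := le_csSup ⟨t, hub⟩ hmem
  have heq : eopNum (pathGraph n) = t := le_antisymm h1 h2
  rw [heq, ht]
  split_ifs with h <;> omega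
end

section
/- For arbitrary graphs G and H, the direct product satisfies ν_I(G × H) ≥ 2·ν_I(G)·ν_I(H). -/
open SimpleGraph

private lemma sym2_out_eq {V : Type*} (e : Sym2 V) :
    s((Quot.out e).1, (Quot.out e).2) = e := by
  change Quot.mk _ (Quot.out e) = e
  exact Quot.out_eq e

private lemma exists_opt_IM {V : Type*} [Fintype V] (G : SimpleGraph V) :
    ∃ M : Finset (Sym2 V), IsInducedMatching G ↑M ∧ M.card = inducedMatchingNum G := by
  classical
  have hne : {n | ∃ M : Finset (Sym2 V), IsInducedMatching G ↑M ∧ M.card = n}.Nonempty :=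
    ⟨0, ∅, ⟨by simp, by simp⟩, by simp⟩
  have hbdd : BddAbove {n | ∃ M : Finset (Sym2 V), IsInducedMatching G ↑M ∧ M.card = n} :=
    ⟨Fintype.card (Sym2 V), fun _ ⟨M, _, hc⟩ => hc ▸ M.card_le_univ⟩
  exact Nat.sSup_mem hne hbdd

private lemma IM_bddAbove {V : Type*} [Fintype V] (G : SimpleGraph V) :
    BddAbove {n | ∃ M : Finset (Sym2 V), IsInducedMatching G ↑M ∧ M.card = n} :=
  ⟨Fintype.card (Sym2 V), fun _ ⟨M, _, hc⟩ => hc ▸ M.card_le_univ⟩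

private noncomputable def phi {V W : Type*} (e : Sym2 V) (f : Sym2 W) (b : Bool) : Sym2 (V × W) :=
  if b then s(((Quot.out e).1, (Quot.out f).1), ((Quot.out e).2, (Quot.out f).2))
  else s(((Quot.out e).1, (Quot.out f).2), ((Quot.out e).2, (Quot.out f).1))

private lemma phi_fst {V W : Type*} (e : Sym2 V) (f : Sym2 W) (b : Bool) :
    Sym2.map Prod.fst (phi e f b) = e := by
  cases b <;> simp only [phi, if_true, Bool.false_eq_true, if_false, Sym2.map_pair_eq] <;>
    exact sym2_out_eq e

private lemma phi_snd {V W : Type*} (e : Sym2 V) (f : Sym2 W) (b : Bool) :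
    Sym2.map Prod.snd (phi e f b) = f := by
  cases b <;> simp only [phi, if_true, Bool.false_eq_true, if_false, Sym2.map_pair_eq]
  · rw [Sym2.eq_swap]; exact sym2_out_eq f
  · exact sym2_out_eq f

private lemma phi_ne {V W : Type*} {e : Sym2 V} {f : Sym2 W}
    (hab : (Quot.out e).1 ≠ (Quot.out e).2) (hcd : (Quot.out f).1 ≠ (Quot.out f).2) :
    phi e f true ≠ phi e f false := by
  intro h
  simp only [phi, if_true, Bool.false_eq_true, if_false, Sym2.eq_iff, Prod.ext_iff] at h
  tauto

private lemma phi_mem {V W : Type*} {e : Sym2 V} {f : Sym2 W} {b : Bool} {x : V × W}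
    (hx : x ∈ phi e f b) : x.1 ∈ e ∧ x.2 ∈ f := by
  have h1 : x.1 ∈ Sym2.map Prod.fst (phi e f b) := Sym2.mem_map.2 ⟨x, hx, rfl⟩
  have h2 : x.2 ∈ Sym2.map Prod.snd (phi e f b) := Sym2.mem_map.2 ⟨x, hx, rfl⟩
  rw [phi_fst] at h1; rw [phi_snd] at h2; exact ⟨h1, h2⟩

private lemma phi_cross {V W : Type*} {e : Sym2 V} {f : Sym2 W} {x y : V × W}
    (hx : x ∈ phi e f true) (hy : y ∈ phi e f false) : x.1 = y.1 ∨ x.2 = y.2 := by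
  simp only [phi, if_true, Bool.false_eq_true, if_false, Sym2.mem_iff] at hx hy
  rcases hx with rfl | rfl <;> rcases hy with rfl | rfl <;> simp

private lemma phi_edge {V W : Type*} {G : SimpleGraph V} {H : SimpleGraph W}
    {e : Sym2 V} {f : Sym2 W} (b : Bool)
    (h1 : G.Adj (Quot.out e).1 (Quot.out e).2) (h2 : H.Adj (Quot.out f).1 (Quot.out f).2) :
    phi e f b ∈ (tensorProd G H).edgeSet := by
  cases b <;> simp only [phi, if_true, Bool.false_eq_true, if_false,
    SimpleGraph.mem_edgeSet]
  · exact ⟨h1, h2.symm⟩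
  · exact ⟨h1, h2⟩

/-- For arbitrary graphs `G` and `H`, `ν_I(G × H) ≥ 2·ν_I(G)·ν_I(H)`. -/
theorem stmt_9 {V W : Type*} [Fintype V] [Fintype W]
    (G : SimpleGraph V) (H : SimpleGraph W) :
    2 * inducedMatchingNum G * inducedMatchingNum H ≤
      inducedMatchingNum (tensorProd G H) := by
  classical
  obtain ⟨M, ⟨hMsub, hMind⟩, hMcard⟩ := exists_opt_IM G
  obtain ⟨N, ⟨hNsub, hNind⟩, hNcard⟩ := exists_opt_IM H
  have hGadj : ∀ e ∈ M, G.Adj (Quot.out e).1 (Quot.out e).2 := fun e he => by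
    have : s((Quot.out e).1, (Quot.out e).2) ∈ G.edgeSet := by
      rw [sym2_out_eq]; exact hMsub he
    exact this
  have hHadj : ∀ f ∈ N, H.Adj (Quot.out f).1 (Quot.out f).2 := fun f hf => by
    have : s((Quot.out f).1, (Quot.out f).2) ∈ H.edgeSet := by
      rw [sym2_out_eq]; exact hNsub hf
    exact this
  set M' : Finset (Sym2 (V × W)) :=
    (M ×ˢ N ×ˢ (Finset.univ : Finset Bool)).image (fun p => phi p.1 p.2.1 p.2.2) with hM'
  have hinj : Set.InjOn (fun p : Sym2 V × Sym2 W × Bool => phi p.1 p.2.1 p.2.2)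
      ↑(M ×ˢ N ×ˢ (Finset.univ : Finset Bool)) := by
    rintro ⟨e, f, b⟩ hp ⟨e', f', b'⟩ hq heq
    simp only [Finset.coe_product, Set.mem_prod, Finset.mem_coe] at hp hq
    simp only at heq
    have hee : e = e' := by rw [← phi_fst e f b, ← phi_fst e' f' b', heq]
    have hff : f = f' := by rw [← phi_snd e f b, ← phi_snd e' f' b', heq]
    subst hee; subst hff
    have hab := (hGadj e hp.1).ne
    have hcd := (hHadj f hp.2.1).ne
    have hbb : b = b' := by
      cases b <;> cases b' <;> first
        | rfl
        | exact absurd heq (phi_ne hab hcd)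
        | exact absurd heq.symm (phi_ne hab hcd)
    rw [hbb]
  have hcard : M'.card = 2 * M.card * N.card := by
    rw [hM', Finset.card_image_of_injOn hinj, Finset.card_product, Finset.card_product]
    simp only [Finset.card_univ, Fintype.card_bool]; ring
  have hIM : IsInducedMatching (tensorProd G H) ↑M' := by
    constructor
    · intro e₀ he₀
      simp only [hM', Finset.coe_image, Set.mem_image, Finset.mem_coe,
        Finset.mem_product, Finset.mem_univ, and_true] at he₀
      obtain ⟨⟨e, f, b⟩, ⟨he, hf⟩, rfl⟩ := he₀
      exact phi_edge b (hGadj e he) (hHadj f hf)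
    · intro e₁ he₁ e₂ he₂ hne x hx y hy hadj
      simp only [hM', Finset.coe_image, Set.mem_image, Finset.mem_coe,
        Finset.mem_product, Finset.mem_univ, and_true] at he₁ he₂
      obtain ⟨⟨e, f, b⟩, ⟨he, hf⟩, rfl⟩ := he₁
      obtain ⟨⟨e', f', b'⟩, ⟨he', hf'⟩, rfl⟩ := he₂
      obtain ⟨hx1, hx2⟩ := phi_mem hx
      obtain ⟨hy1, hy2⟩ := phi_mem hy
      obtain ⟨hadj1, hadj2⟩ : G.Adj x.1 y.1 ∧ H.Adj x.2 y.2 := hadj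
      have hee : e = e' := by
        by_contra hee
        exact hMind e he e' he' hee x.1 hx1 y.1 hy1 hadj1
      have hff : f = f' := by
        by_contra hff
        exact hNind f hf f' hf' hff x.2 hx2 y.2 hy2 hadj2
      subst hee; subst hff
      have hbb : b ≠ b' := fun h => hne (by rw [h])
      cases b <;> cases b'
      · exact hbb rfl
      · rcases phi_cross hy hx with h | h
        · exact hadj1.ne h.symm
        · exact hadj2.ne h.symm
      · rcases phi_cross hx hy with h | h
        · exact hadj1.ne h
        · exact hadj2.ne h
      · exact hbb rfl
  have hmemS : M'.card ∈ {n | ∃ B : Finset (Sym2 (V × W)),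
      IsInducedMatching (tensorProd G H) ↑B ∧ B.card = n} := ⟨M', hIM, rfl⟩
  calc 2 * inducedMatchingNum G * inducedMatchingNum H = M'.card := by
        rw [hcard, hMcard, hNcard]
    _ ≤ inducedMatchingNum (tensorProd G H) :=
        le_csSup (IM_bddAbove (tensorProd G H)) hmemS
end

section
/- For any graph G, ρ_3(G □ K_2) ≤ ρ_2(G); moreover, if G is bipartite then ρ_3(G □ K_2) = ρ_2(G). -/
open SimpleGraph

lemma twoPack_bdd {V : Type*} [Fintype V] (G : SimpleGraph V) :
    BddAbove {n | ∃ P : Finset V,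
      (∀ x ∈ P, ∀ y ∈ P, x ≠ y →
        ¬ G.Adj x y ∧ (∀ z, ¬ (G.Adj x z ∧ G.Adj z y))) ∧ P.card = n} := by
  refine ⟨Fintype.card V, ?_⟩
  rintro n ⟨P, -, rfl⟩
  exact P.card_le_univ

lemma threePack_bdd {V : Type*} [Fintype V] (G : SimpleGraph V) :
    BddAbove {n | ∃ P : Finset V,
      (∀ x ∈ P, ∀ y ∈ P, x ≠ y →
        ¬ G.Adj x y ∧ (∀ z, ¬ (G.Adj x z ∧ G.Adj z y)) ∧
        (∀ z w, ¬ (G.Adj x z ∧ G.Adj z w ∧ G.Adj w y))) ∧ P.card = n} := by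
  refine ⟨Fintype.card V, ?_⟩
  rintro n ⟨P, -, rfl⟩
  exact P.card_le_univ

/-- For any graph `G`, `ρ₃(G □ K₂) ≤ ρ₂(G)`; if moreover `G` is bipartite, then
`ρ₃(G □ K₂) = ρ₂(G)`. -/
theorem stmt_17 {V : Type*} [Fintype V] (G : SimpleGraph V) :
    threePackNum (G.boxProd (⊤ : SimpleGraph (Fin 2))) ≤ twoPackNum G ∧
    ((∃ c : V → Bool, ∀ x y, G.Adj x y → c x ≠ c y) →
      threePackNum (G.boxProd (⊤ : SimpleGraph (Fin 2))) = twoPackNum G) := by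
  classical
  set H := G.boxProd (⊤ : SimpleGraph (Fin 2)) with hHdef
  have hadj : ∀ a b : V × Fin 2, H.Adj a b ↔
      (G.Adj a.1 b.1 ∧ a.2 = b.2) ∨ (a.1 = b.1 ∧ a.2 ≠ b.2) := by
    intro a b
    rw [hHdef, SimpleGraph.boxProd_adj]
    simp [SimpleGraph.top_adj, and_comm]
  have hle : threePackNum H ≤ twoPackNum G := by
    unfold threePackNum twoPackNum
    refine csSup_le ⟨0, ∅, by simp, by simp⟩ ?_
    rintro n ⟨P, hP, rfl⟩
    -- project to V
    have hinj : Set.InjOn (Prod.fst : V × Fin 2 → V) ↑P := by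
      intro a ha b hb hab
      by_contra hne
      have := (hP a ha b hb hne).1
      apply this
      rw [hadj]
      right
      exact ⟨hab, fun h2 => hne (Prod.ext hab h2)⟩
    have hcard : (P.image Prod.fst).card = P.card := Finset.card_image_of_injOn hinj
    apply le_csSup (twoPack_bdd G)
    refine ⟨P.image Prod.fst, ?_, hcard⟩
    intro x hx y hy hxy
    simp only [Finset.mem_image] at hx hy
    obtain ⟨a, ha, rfl⟩ := hx
    obtain ⟨b, hb, rfl⟩ := hy
    have hab : a ≠ b := fun h => hxy (by rw [h])
    obtain ⟨h1, h2, h3⟩ := hP a ha b hb hab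
    constructor
    · intro hGadj
      by_cases he : a.2 = b.2
      · exact h1 ((hadj a b).2 (Or.inl ⟨hGadj, he⟩))
      · exact h2 (b.1, a.2) ⟨(hadj _ _).2 (Or.inl ⟨hGadj, rfl⟩),
          (hadj _ _).2 (Or.inr ⟨rfl, he⟩)⟩
    · intro z ⟨hz1, hz2⟩
      by_cases he : a.2 = b.2
      · exact h2 (z, a.2) ⟨(hadj _ _).2 (Or.inl ⟨hz1, rfl⟩),
          (hadj _ _).2 (Or.inl ⟨hz2, he⟩)⟩
      · exact h3 (z, a.2) (z, b.2) ⟨(hadj _ _).2 (Or.inl ⟨hz1, rfl⟩),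
          (hadj _ _).2 (Or.inr ⟨rfl, he⟩), (hadj _ _).2 (Or.inl ⟨hz2, rfl⟩)⟩
  refine ⟨hle, fun ⟨c, hc⟩ => le_antisymm hle ?_⟩
  -- bipartite: lift a 2-packing to a 3-packing in the prism
  unfold threePackNum twoPackNum
  refine csSup_le ⟨0, ∅, by simp, by simp⟩ ?_
  rintro n ⟨P, hP, rfl⟩
  set f : V → Fin 2 := fun v => if c v then 1 else 0 with hf
  set g : V × Fin 2 → Bool := fun p => xor (c p.1) (p.2 = 1) with hg
  have hgflip : ∀ a b : V × Fin 2, H.Adj a b → g a ≠ g b := by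
    rintro ⟨a1, a2⟩ ⟨b1, b2⟩ hab
    rw [hadj] at hab
    rcases hab with ⟨hG, he⟩ | ⟨he, hne⟩
    · have hcc := hc _ _ hG
      simp only [hg, he] at *
      cases h1 : c a1 <;> cases h2 : c b1 <;> simp_all
    · simp only [hg, he] at *
      rw [he]
      fin_cases a2 <;> fin_cases b2 <;> cases h : c b1 <;> simp_all
  have hgval : ∀ v : V, g (v, f v) = false := by
    intro v
    simp only [hg, hf]
    by_cases h : c v <;> simp [h, Fin.ext_iff]
  set Q : Finset (V × Fin 2) := P.image (fun v => (v, f v)) with hQ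
  have hinj : Set.InjOn (fun v => (v, f v)) ↑P := by
    intro a _ b _ h
    exact congrArg Prod.fst h
  have hcard : Q.card = P.card := Finset.card_image_of_injOn hinj
  apply le_csSup (threePack_bdd H)
  refine ⟨Q, ?_, hcard⟩
  intro x hx y hy hxy
  simp only [hQ, Finset.mem_image] at hx hy
  obtain ⟨a, ha, rfl⟩ := hx
  obtain ⟨b, hb, rfl⟩ := hy
  have hab : a ≠ b := fun h => hxy (by rw [h])
  obtain ⟨h1, h2⟩ := hP a ha b hb hab
  refine ⟨?_, ?_, ?_⟩
  · intro hadj'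
    have := hgflip _ _ hadj'
    rw [hgval, hgval] at this
    exact this rfl
  · rintro ⟨z, k⟩ ⟨hz1, hz2⟩
    rw [hadj] at hz1 hz2
    rcases hz1 with ⟨hG1, -⟩ | ⟨he1, -⟩ <;> rcases hz2 with ⟨hG2, -⟩ | ⟨he2, -⟩
    · exact h2 z ⟨hG1, hG2⟩
    · have hz : z = b := he2
      have haz : G.Adj a z := hG1
      exact h1 (hz ▸ haz)
    · have hz : a = z := he1
      have hzb : G.Adj z b := hG2
      exact h1 (hz ▸ hzb)
    · exact hab ((show a = z from he1).trans (show z = b from he2))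
  · intro z w ⟨hz1, hz2, hz3⟩
    have e1 := hgflip _ _ hz1
    have e2 := hgflip _ _ hz2
    have e3 := hgflip _ _ hz3
    rw [hgval] at e1
    rw [hgval] at e3
    revert e1 e2 e3
    cases g z <;> cases g w <;> decide
end
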